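/- The differential of the i-th component of the similarity map is dS_i(W)[X] = ∑_{j∈N_i} ω_{ij} R_{S_i(W)}[X_j / W_j] for all X ∈ T_0^n (componentwise division), where R_q[u] = q⊙u − ⟨q,u⟩q. -/

import Mathlib

open Finset Real

/-- The open probability simplex in ℝ^c. -/
def simplexS (c : ℕ) : Set (Fin c → ℝ) := {p | (∀ i, 0 < p i) ∧ ∑ i, p i = 1}

/-- Tangent space: vectors with zero coordinate sum. -/
def T0 (c : ℕ) : Set (Fin c → ℝ) := {v | ∑ i, v i = 0}

/-- Orthogonal projection onto T0. -/
noncomputable def proj0 {c : ℕ} (u : Fin c → ℝ) : Fin c → ℝ :=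
  fun i => u i - (∑ j, u j) / c

/-- exp_p(v) = (p ⊙ e^v)/⟨p, e^v⟩. -/
noncomputable def expMap {c : ℕ} (p v : Fin c → ℝ) : Fin c → ℝ :=
  fun i => p i * Real.exp (v i) / ∑ j, p j * Real.exp (v j)

/-- Inverse of exp_p restricted to T0: exp_p⁻¹(q) = Π₀[log(q/p)]. -/
noncomputable def expInv {c : ℕ} (p q : Fin c → ℝ) : Fin c → ℝ :=
  proj0 (fun i => Real.log (q i / p i))

/-- R_q[u] = q ⊙ u − ⟨q,u⟩ q. -/
def Rmap {c : ℕ} (q u : Fin c → ℝ) : Fin c → ℝ :=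
  fun i => q i * u i - (∑ j, q j * u j) * q i

/-- Barycenter 𝟙ₛ = (1/c,…,1/c). -/
noncomputable def bary (c : ℕ) : Fin c → ℝ := fun _ => 1 / c

/-- The i-th component of the similarity map, in the form
S_i(W) = exp_{𝟙ₛ}( ∑_{j∈N_i} ω_{ij}(exp_{𝟙ₛ}⁻¹(W_j) − D_j/ρ) ). -/
noncomputable def Sim {n c : ℕ} (N : Fin n → Finset (Fin n)) (ω : Fin n → Fin n → ℝ)
    (D : Fin n → Fin c → ℝ) (ρ : ℝ) (W : Fin n → Fin c → ℝ) (i : Fin n) : Fin c → ℝ :=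
  expMap (bary c) (∑ j ∈ N i, ω i j • (expInv (bary c) (W j) - ρ⁻¹ • D j))

lemma key_alg {c : ℕ} {ι : Type*} (t : Finset ι) (ω : ι → ℝ) (a : ι → ℝ) (u : ι → Fin c → ℝ)
    (b : Fin c → ℝ) (hZ : (∑ m, b m) ≠ 0) (k : Fin c) :
    b k * (-((∑ m, b m) ^ 2)⁻¹ * (∑ m, b m * (∑ j ∈ t, ω j * (u j m - a j)))) +
      (∑ m, b m)⁻¹ * (b k * (∑ j ∈ t, ω j * (u j k - a j))) =
    ∑ j ∈ t, ω j * (b k / (∑ m, b m) * u j k -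
      (∑ m, b m / (∑ m, b m) * u j m) * (b k / (∑ m, b m))) := by
  set Z := ∑ m, b m with hZdef
  have h1 : ∑ m, b m * (∑ j ∈ t, ω j * (u j m - a j))
      = ∑ j ∈ t, ω j * ((∑ m, b m * u j m) - a j * Z) := by
    simp_rw [Finset.mul_sum]
    rw [Finset.sum_comm]
    refine Finset.sum_congr rfl fun j _ => ?_
    have h : ∀ m, b m * (ω j * (u j m - a j)) = ω j * (b m * u j m) - (ω j * a j) * b m := by
      intro m; ring
    simp_rw [h, Finset.sum_sub_distrib, ← Finset.mul_sum]
    ring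
  rw [h1]
  simp_rw [Finset.mul_sum, ← Finset.sum_add_distrib]
  refine Finset.sum_congr rfl fun j _ => ?_
  simp_rw [div_mul_eq_mul_div, ← Finset.sum_div]
  field_simp
  ring

theorem stmt11 {n c : ℕ} (N : Fin n → Finset (Fin n)) (ω : Fin n → Fin n → ℝ)
    (D : Fin n → Fin c → ℝ) (ρ : ℝ) (hρ : 0 < ρ)
    (hself : ∀ i, i ∈ N i)
    (hωpos : ∀ i, ∀ j ∈ N i, 0 < ω i j)
    (hωsum : ∀ i, ∑ j ∈ N i, ω i j = 1)
    (W : Fin n → Fin c → ℝ) (hW : ∀ j, W j ∈ simplexS c) (i : Fin n) :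
    ∃ f' : (Fin n → Fin c → ℝ) →L[ℝ] (Fin c → ℝ),
      HasFDerivAt (fun V => Sim N ω D ρ V i) f' W ∧
      ∀ X : Fin n → Fin c → ℝ, (∀ j, X j ∈ T0 c) →
        f' X = ∑ j ∈ N i, ω i j • Rmap (Sim N ω D ρ W i) (fun k => X j k / W j k) := by
  classical
  rcases Nat.eq_zero_or_pos c with rfl | hc
  · exact absurd (hW i).2 (by simp)
  have hcR : (0:ℝ) < c := by exact_mod_cast hc
  have hbary : ∀ k : Fin c, (0:ℝ) < bary c k := fun k => by
    simp only [bary]; positivity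
  have hWpos : ∀ j k, 0 < W j k := fun j k => (hW j).1 k
  -- elementary CLMs
  set L : Fin n → Fin c → (Fin n → Fin c → ℝ) →L[ℝ] ℝ := fun j k =>
    (W j k)⁻¹ • ((ContinuousLinearMap.proj k).comp
      (ContinuousLinearMap.proj j : (Fin n → Fin c → ℝ) →L[ℝ] (Fin c → ℝ))) with hL
  have hlog : ∀ (j : Fin n) (k : Fin c),
      HasFDerivAt (fun V : Fin n → Fin c → ℝ => Real.log (V j k / bary c k)) (L j k) W := by
    intro j k
    have h1 : HasDerivAt (fun t : ℝ => Real.log (t / bary c k)) (W j k)⁻¹ (W j k) := by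
      have h2 : HasDerivAt (fun t : ℝ => t / bary c k) (1 / bary c k) (W j k) :=
        (hasDerivAt_id _).div_const _
      have h3 := (Real.hasDerivAt_log
        (div_ne_zero (hWpos j k).ne' (hbary k).ne')).comp (W j k) h2
      refine h3.congr_deriv (Eq.symm ?_)
      rw [inv_div, div_mul_div_comm, mul_one, mul_comm, ← div_div,
        div_self (hbary k).ne', one_div]
    exact h1.comp_hasFDerivAt W ((hasFDerivAt_apply (𝕜 := ℝ) k (W j)).comp W (hasFDerivAt_apply (𝕜 := ℝ) j W))
  -- derivative of expInv component
  set E : Fin n → Fin c → (Fin n → Fin c → ℝ) →L[ℝ] ℝ := fun j m =>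
    L j m - (c:ℝ)⁻¹ • ∑ l, L j l with hE
  have hexpInv : ∀ (j : Fin n) (m : Fin c),
      HasFDerivAt (fun V : Fin n → Fin c → ℝ => expInv (bary c) (V j) m) (E j m) W := by
    intro j m
    have heq : (fun V : Fin n → Fin c → ℝ => expInv (bary c) (V j) m)
        = fun V => Real.log (V j m / bary c m)
            - (c:ℝ)⁻¹ * (∑ l, Real.log (V j l / bary c l)) := by
      funext V
      simp [expInv, proj0, div_eq_inv_mul]
    rw [heq]
    exact (hlog j m).sub ((HasFDerivAt.fun_sum (fun l _ => hlog j l)).const_mul _)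
  -- the inner map v
  set vf : (Fin n → Fin c → ℝ) → Fin c → ℝ := fun V =>
    ∑ j ∈ N i, ω i j • (expInv (bary c) (V j) - ρ⁻¹ • D j) with hvf
  set A : Fin c → (Fin n → Fin c → ℝ) →L[ℝ] ℝ := fun m =>
    ∑ j ∈ N i, ω i j • E j m with hA
  have hvm : ∀ m : Fin c, HasFDerivAt (fun V => vf V m) (A m) W := by
    intro m
    have heq : (fun V => vf V m)
        = fun V => ∑ j ∈ N i, ω i j * (expInv (bary c) (V j) m - ρ⁻¹ * D j m) := by
      funext V
      simp [hvf, Finset.sum_apply, mul_sub]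
    rw [heq]
    exact HasFDerivAt.fun_sum fun j hj => ((hexpInv j m).sub_const _).const_mul _
  -- numerator / denominator
  set b : Fin c → ℝ := fun m => bary c m * Real.exp (vf W m) with hb
  have hbpos : ∀ m, 0 < b m := fun m => mul_pos (hbary m) (Real.exp_pos _)
  set Z : ℝ := ∑ m, b m with hZ
  have hZpos : 0 < Z := Finset.sum_pos (fun m _ => hbpos m) ⟨⟨0, hc⟩, Finset.mem_univ _⟩
  have hnum : ∀ m : Fin c, HasFDerivAt (fun V => bary c m * Real.exp (vf V m))
      (b m • A m) W := by
    intro m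
    have := ((Real.hasDerivAt_exp (vf W m)).comp_hasFDerivAt W (hvm m)).const_mul (bary c m)
    refine this.congr_fderiv (Eq.symm ?_)
    rw [hb, smul_smul]
  have hden : HasFDerivAt (fun V => ∑ m, bary c m * Real.exp (vf V m))
      (∑ m, b m • A m) W := HasFDerivAt.fun_sum fun m _ => hnum m
  have hinv : HasFDerivAt (fun V => (∑ m, bary c m * Real.exp (vf V m))⁻¹)
      ((-(Z ^ 2)⁻¹) • ∑ m, b m • A m) W :=
    (hasDerivAt_inv hZpos.ne').comp_hasFDerivAt W hden
  set f' : (Fin n → Fin c → ℝ) →L[ℝ] (Fin c → ℝ) := ContinuousLinearMap.pi (fun k =>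
    b k • ((-(Z ^ 2)⁻¹) • ∑ m, b m • A m) + Z⁻¹ • (b k • A k)) with hf'
  refine ⟨f', ?_, ?_⟩
  · apply hasFDerivAt_pi.2
    intro k
    have : HasFDerivAt (fun V => (bary c k * Real.exp (vf V k)) *
        (∑ m, bary c m * Real.exp (vf V m))⁻¹)
        (b k • ((-(Z ^ 2)⁻¹) • ∑ m, b m • A m) + Z⁻¹ • (b k • A k)) W :=
      (hnum k).mul hinv
    exact this
  · intro X hX
    funext k
    have hfX : f' X k = b k * (-(Z ^ 2)⁻¹ * (∑ m, b m * A m X)) + Z⁻¹ * (b k * A k X) := by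
      simp [hf', ContinuousLinearMap.pi_apply, Finset.sum_apply, smul_eq_mul,
        ContinuousLinearMap.sum_apply, mul_assoc]
    have hAX : ∀ m, A m X = ∑ j ∈ N i, ω i j *
        ((X j m / W j m) - (c:ℝ)⁻¹ * (∑ l, X j l / W j l)) := by
      intro m
      simp [hA, hE, hL, ContinuousLinearMap.sum_apply, div_eq_inv_mul, mul_sum]
    have hSk : ∀ m, Sim N ω D ρ W i m = b m / Z := by
      intro m; rfl
    have hRHS : (∑ j ∈ N i, ω i j • Rmap (Sim N ω D ρ W i) (fun k => X j k / W j k)) k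
        = ∑ j ∈ N i, ω i j * (b k / Z * (X j k / W j k)
            - (∑ m, b m / Z * (X j m / W j m)) * (b k / Z)) := by
      simp [Rmap, Finset.sum_apply, hSk]
    rw [hfX, hRHS]
    simp_rw [hAX]
    exact key_alg (N i) (ω i) (fun j => (c:ℝ)⁻¹ * (∑ l, X j l / W j l))
      (fun j m => X j m / W j m) b hZpos.ne' k
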